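/- Fix τ ∈ (0,π) and integers R ≥ 2 and n > R, and define τ_n : ℝ² → ℝ by τ_n(x) := τ·r(‖x‖−R, n−R). Then: (i) for all x, x' ∈ ℝ² with ‖x'‖ ≥ ‖x‖ one has 0 ≤ τ_n(x) − τ_n(x') ≤ τ·‖x−x'‖·q(‖x‖−R)/Q(n−R); (ii) Q(n) → ∞ as n → ∞; (iii) τ_n(x) = τ whenever ‖x‖ ≤ R, and τ_n(x) = 0 whenever ‖x‖ ≥ n. -/

import Mathlib

/-- `q(s) = 1` for `s ≤ 2`, and `q(s) = 1/(s·log s)` for `s > 2`. -/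
noncomputable def q (s : ℝ) : ℝ := if s ≤ 2 then 1 else 1 / (s * Real.log s)

/-- `Q(k) = ∫_0^k q(s) ds`. -/
noncomputable def Q (k : ℝ) : ℝ := ∫ s in (0:ℝ)..k, q s

/-- `r(s,k) = 1` if `s ≤ 0`, `r(s,k) = ∫_s^k (q(s')/Q(k)) ds'` if `0 < s < k`,
and `r(s,k) = 0` if `s ≥ k`. -/
noncomputable def r (s k : ℝ) : ℝ :=
  if s ≤ 0 then 1 else if s < k then ∫ s' in s..k, q s' / Q k else 0

/-- The deformation `τ_n(x) := τ · r(‖x‖ - R, n - R)` on the plane `ℝ²` with the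
maximum norm. -/
noncomputable def tauN (τ : ℝ) (R n : ℤ) (x : Fin 2 → ℝ) : ℝ :=
  τ * r (‖x‖ - (R : ℝ)) ((n : ℝ) - (R : ℝ))

lemma q_pos (s : ℝ) : 0 < q s := by
  unfold q
  split_ifs with h
  · norm_num
  · push_neg at h
    have hs : (0:ℝ) < s := by linarith
    have hl : 0 < Real.log s := Real.log_pos (by linarith)
    positivity

lemma one_le_mul_log {s : ℝ} (h : 2 ≤ s) : 1 ≤ s * Real.log s := by
  have hl : Real.log 2 ≤ Real.log s := Real.log_le_log (by norm_num) h
  have h4 : Real.log 4 = 2 * Real.log 2 := by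
    rw [show (4:ℝ) = 2^2 by norm_num, Real.log_pow]; push_cast; ring
  have he : (1:ℝ) ≤ Real.log 4 := by
    rw [Real.le_log_iff_exp_le (by norm_num)]
    exact Real.exp_one_lt_d9.le.trans (by norm_num)
  have hl2 : 0 < Real.log 2 := Real.log_pos (by norm_num)
  have h2 : 2 * Real.log 2 ≤ s * Real.log s :=
    mul_le_mul h hl hl2.le (by linarith)
  linarith

lemma q_le_one (s : ℝ) : q s ≤ 1 := by
  unfold q
  split_ifs with h
  · exact le_refl 1
  · push_neg at h
    have h1 := one_le_mul_log h.le
    rw [div_le_one (by linarith)]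
    linarith

lemma q_anti : Antitone q := by
  intro a b hab
  rcases le_or_gt b 2 with hb | hb
  · have ha : a ≤ 2 := hab.trans hb
    unfold q; rw [if_pos ha, if_pos hb]
  · rcases le_or_gt a 2 with ha | ha
    · have : q a = 1 := by unfold q; rw [if_pos ha]
      rw [this]; exact q_le_one b
    · have ha1 : 1 ≤ a * Real.log a := one_le_mul_log ha.le
      have hmm : a * Real.log a ≤ b * Real.log b :=
        mul_le_mul hab (Real.log_le_log (by linarith) hab) (Real.log_pos (by linarith)).le
          (by linarith)
      unfold q
      rw [if_neg (not_le.2 ha), if_neg (not_le.2 hb)]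
      exact one_div_le_one_div_of_le (by linarith) hmm

lemma q_ii (a b : ℝ) : IntervalIntegrable q MeasureTheory.volume a b :=
  q_anti.intervalIntegrable

lemma Q_sub (a b : ℝ) : Q b - Q a = ∫ s in a..b, q s := by
  have := intervalIntegral.integral_add_adjacent_intervals (q_ii 0 a) (q_ii a b)
  unfold Q
  linarith

lemma Q_mono : Monotone Q := by
  intro a b hab
  have h : 0 ≤ ∫ s in a..b, q s :=
    intervalIntegral.integral_nonneg hab (fun t _ => (q_pos t).le)
  have := Q_sub a b
  linarith

lemma Q_sub_le {a b : ℝ} (h : a ≤ b) : Q b - Q a ≤ (b - a) * q a := by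
  rw [Q_sub]
  have h2 : (∫ s in a..b, q s) ≤ ∫ _ in a..b, q a := by
    apply intervalIntegral.integral_mono_on h (q_ii a b) intervalIntegrable_const
    intro t ht
    exact q_anti ht.1
  rw [intervalIntegral.integral_const, smul_eq_mul] at h2
  exact h2

lemma Q_zero : Q 0 = 0 := intervalIntegral.integral_same

lemma Q_pos {k : ℝ} (hk : 0 < k) : 0 < Q k :=
  intervalIntegral.intervalIntegral_pos_of_pos_on (q_ii 0 k) (fun t _ => q_pos t) hk

lemma r_eq (s k : ℝ) (hk : 0 < k) : r s k = (Q k - Q (min (max s 0) k)) / Q k := by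
  unfold r
  rcases le_or_gt s 0 with hs | hs
  · rw [if_pos hs]
    have hm : min (max s 0) k = 0 := by rw [max_eq_right hs, min_eq_left hk.le]
    rw [hm, Q_zero, sub_zero, div_self (Q_pos hk).ne']
  · rw [if_neg (not_le.2 hs)]
    rcases lt_or_ge s k with hsk | hsk
    · rw [if_pos hsk]
      have hm : min (max s 0) k = s := by rw [max_eq_left hs.le, min_eq_left hsk.le]
      rw [hm, intervalIntegral.integral_div, ← Q_sub]
    · rw [if_neg (not_lt.2 hsk)]
      have hm : min (max s 0) k = k := by rw [max_eq_left hs.le, min_eq_right hsk]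
      rw [hm, sub_self, zero_div]

lemma Q_lower {k : ℝ} (hk : 3 ≤ k) :
    Real.log (Real.log k) - Real.log (Real.log 3) ≤ Q k := by
  have hint : (∫ s in (3:ℝ)..k, q s)
      = Real.log (Real.log k) - Real.log (Real.log 3) := by
    apply intervalIntegral.integral_eq_sub_of_hasDerivAt
    · intro t ht
      rw [Set.uIcc_of_le hk] at ht
      have ht3 : (3:ℝ) ≤ t := ht.1
      have htpos : (0:ℝ) < t := by linarith
      have hlt : 0 < Real.log t := Real.log_pos (by linarith)
      have h1 : HasDerivAt Real.log t⁻¹ t := Real.hasDerivAt_log htpos.ne'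
      have h2 : HasDerivAt Real.log (Real.log t)⁻¹ (Real.log t) :=
        Real.hasDerivAt_log hlt.ne'
      have := h2.comp t h1
      refine HasDerivAt.congr_deriv this ?_
      symm
      unfold q
      rw [if_neg (by push_neg; linarith : ¬ t ≤ 2)]
      field_simp
    · exact q_ii 3 k
  have h3 : 0 ≤ Q 3 - Q 0 := sub_nonneg.2 (Q_mono (by norm_num))
  rw [Q_zero] at h3
  have := Q_sub 3 k
  rw [hint] at this
  linarith

lemma Q_tendsto : Filter.Tendsto Q Filter.atTop Filter.atTop := by
  have h1 : Filter.Tendsto (fun k => Real.log (Real.log k) - Real.log (Real.log 3))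
      Filter.atTop Filter.atTop :=
    Filter.tendsto_atTop_add_const_right _ _
      (Real.tendsto_log_atTop.comp Real.tendsto_log_atTop)
  apply Filter.tendsto_atTop_mono' _ _ h1
  filter_upwards [Filter.eventually_ge_atTop (3:ℝ)] with k hk
  exact Q_lower hk

theorem stmt_2 (τ : ℝ) (hτ0 : 0 < τ) (hτπ : τ < Real.pi) (R n : ℤ)
    (hR : 2 ≤ R) (hn : R < n) :
    (∀ x x' : Fin 2 → ℝ, ‖x‖ ≤ ‖x'‖ →
      0 ≤ tauN τ R n x - tauN τ R n x' ∧
      tauN τ R n x - tauN τ R n x' ≤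
        τ * ‖x - x'‖ * q (‖x‖ - (R : ℝ)) / Q ((n : ℝ) - (R : ℝ))) ∧
    Filter.Tendsto Q Filter.atTop Filter.atTop ∧
    (∀ x : Fin 2 → ℝ, ‖x‖ ≤ (R : ℝ) → tauN τ R n x = τ) ∧
    (∀ x : Fin 2 → ℝ, (n : ℝ) ≤ ‖x‖ → tauN τ R n x = 0) := by
  have hk1 : (1:ℝ) ≤ (n:ℝ) - (R:ℝ) := by
    have : (R:ℝ) + 1 ≤ (n:ℝ) := by exact_mod_cast hn
    linarith
  set k := (n:ℝ) - (R:ℝ) with hkdef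
  have hk0 : (0:ℝ) < k := by linarith
  have hQk : 0 < Q k := Q_pos hk0
  refine ⟨?_, Q_tendsto, ?_, ?_⟩
  · intro x x' hxx
    set s := ‖x‖ - (R:ℝ) with hsdef
    set s' := ‖x'‖ - (R:ℝ) with hs'def
    have hss : s ≤ s' := by rw [hsdef, hs'def]; linarith
    set c := min (max s 0) k with hcdef
    set c' := min (max s' 0) k with hc'def
    have hdiff : tauN τ R n x - tauN τ R n x'
        = τ * ((Q c' - Q c) / Q k) := by
      unfold tauN
      rw [← hkdef, ← hsdef, ← hs'def, r_eq s k hk0, r_eq s' k hk0, ← hcdef, ← hc'def]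
      ring
    have hcc : c ≤ c' := min_le_min (max_le_max hss le_rfl) le_rfl
    have hQcc : 0 ≤ Q c' - Q c := sub_nonneg.2 (Q_mono hcc)
    constructor
    · rw [hdiff]
      positivity
    · rw [hdiff]
      have hnorm : s' - s ≤ ‖x - x'‖ := by
        have h1 : ‖x'‖ - ‖x‖ ≤ ‖x' - x‖ := norm_sub_norm_le x' x
        rw [norm_sub_rev] at h1
        rw [hsdef, hs'def]; linarith
      have hkey : Q c' - Q c ≤ ‖x - x'‖ * q s := by
        rcases le_or_gt s k with hsk | hsk
        · have hsc : s ≤ c := le_min (le_max_left s 0) hsk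
          have hq : q c ≤ q s := q_anti hsc
          have hlip : c' - c ≤ s' - s := by
            have h1' : |max s' 0 - max s 0| ≤ |s' - s| := by
              refine (abs_max_sub_max_le_max s' 0 s 0).trans ?_
              simp only [sub_self, abs_zero]
              exact max_le le_rfl (abs_nonneg _)
            have h3 : |c' - c| ≤ |s' - s| := by
              refine (abs_min_sub_min_le_max (max s' 0) k (max s 0) k).trans ?_
              simp only [sub_self, abs_zero]
              exact max_le h1' (abs_nonneg _)
            calc c' - c ≤ |c' - c| := le_abs_self _
              _ ≤ |s' - s| := h3
              _ = s' - s := abs_of_nonneg (by linarith)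
          calc Q c' - Q c ≤ (c' - c) * q c := Q_sub_le hcc
            _ ≤ (s' - s) * q s :=
                mul_le_mul hlip hq (q_pos c).le (by linarith)
            _ ≤ ‖x - x'‖ * q s :=
                mul_le_mul_of_nonneg_right hnorm (q_pos s).le
        · have hc : c = k := by
            rw [hcdef, min_eq_right]
            exact le_max_of_le_left hsk.le
          have hc' : c' = k := by
            rw [hc'def, min_eq_right]
            exact le_max_of_le_left (hsk.le.trans hss)
          rw [hc, hc', sub_self]
          have := q_pos s
          positivity
      have hrw : τ * ‖x - x'‖ * q s / Q k = τ * ((‖x - x'‖ * q s) / Q k) := by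
        ring
      rw [hrw]
      gcongr
  · intro x hx
    unfold tauN r
    rw [if_pos (by linarith : ‖x‖ - (R:ℝ) ≤ 0), mul_one]
  · intro x hx
    have hs : k ≤ ‖x‖ - (R:ℝ) := by rw [hkdef]; linarith
    unfold tauN r
    rw [← hkdef, if_neg (by push_neg; linarith : ¬ ‖x‖ - (R:ℝ) ≤ 0),
      if_neg (by push_neg; linarith : ¬ ‖x‖ - (R:ℝ) < k), mul_zero]
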